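/- Let B be an N×N skew-symmetric integer matrix whose entries satisfy b_{j,N} = b_{1,j+1} for j = 1,…,N-1, and b_{j+1,k+1} = b_{j,k} + b_{1,j+1}[-b_{1,k+1}]_+ - b_{1,k+1}[-b_{1,j+1}]_+ for 1 ≤ j,k ≤ N-1. Then the top-row vector (b_{1,2},…,b_{1,N}) is palindromic: writing a_j = b_{1,j+1}, one has a_j = a_{N-j} for all j = 1,…,N-1. -/

import Mathlib

open Matrix Finset

private def ff (x y : ℤ) : ℤ := x * max (-y) 0 - y * max (-x) 0

private lemma ff_antisymm (x y : ℤ) : ff y x = - ff x y := by unfold ff; ring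

private lemma fin_mk_add_one {n m : ℕ} (h : m < n) :
    (⟨m, by omega⟩ : Fin (n + 1)) + 1 = ⟨m + 1, by omega⟩ := by
  apply Fin.ext
  simp [Fin.add_def, Nat.mod_eq_of_lt]
  omega

private lemma fin_mk_eq {n a b : ℕ} (ha : a < n + 1) (hb : b < n + 1) (h : a = b) :
    (⟨a, ha⟩ : Fin (n + 1)) = ⟨b, hb⟩ := by subst h; rfl

section
variable {n : ℕ} (B : Matrix (Fin (n + 1)) (Fin (n + 1)) ℤ)

/-- `a m = B 0 m` (with junk for out-of-range `m`). -/
private def aa (m : ℕ) : ℤ := B 0 ⟨m % (n + 1), Nat.mod_lt _ n.succ_pos⟩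

private lemma aa_eq {m : ℕ} (h : m ≤ n) : aa B m = B 0 ⟨m, Nat.lt_succ_of_le h⟩ := by
  unfold aa
  congr 1
  exact Fin.ext (Nat.mod_eq_of_lt (by omega))

variable
    (h1 : ∀ j : Fin (n + 1), j ≠ Fin.last n → B j (Fin.last n) = B 0 (j + 1))
    (h2 : ∀ j k : Fin (n + 1), j ≠ Fin.last n → k ≠ Fin.last n →
      B (j + 1) (k + 1) =
        B j k + B 0 (j + 1) * max (-B 0 (k + 1)) 0
          - B 0 (k + 1) * max (-B 0 (j + 1)) 0)

include h2 in
private lemma diag (r : ℕ) (hr : 1 ≤ r) :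
    ∀ m, ∀ hmr : m + r ≤ n, B ⟨m, by omega⟩ ⟨m + r, by omega⟩ =
      aa B r + ∑ j ∈ range m, ff (aa B (j + 1)) (aa B (j + 1 + r)) := by
  intro m
  induction m with
  | zero =>
    intro h
    have ar : aa B r = B 0 ⟨r, by omega⟩ := aa_eq B (by omega)
    have e0 : (⟨0, by omega⟩ : Fin (n + 1)) = 0 := rfl
    have e1 : (⟨0 + r, by omega⟩ : Fin (n + 1)) = ⟨r, by omega⟩ := fin_mk_eq _ _ (Nat.zero_add r)
    rw [e0, e1, ar]
    simp
  | succ m ih =>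
    intro h
    have hm : m + r ≤ n := by omega
    have hmn : m < n := by omega
    have hmrn : m + r < n := by omega
    have hne1 : (⟨m, by omega⟩ : Fin (n + 1)) ≠ Fin.last n := by
      simp only [ne_eq, Fin.ext_iff, Fin.val_last]; omega
    have hne2 : (⟨m + r, by omega⟩ : Fin (n + 1)) ≠ Fin.last n := by
      simp only [ne_eq, Fin.ext_iff, Fin.val_last]; omega
    have key := h2 ⟨m, by omega⟩ ⟨m + r, by omega⟩ hne1 hne2
    rw [fin_mk_add_one hmn, fin_mk_add_one hmrn] at key
    have e2 : aa B (m + 1) = B 0 ⟨m + 1, by omega⟩ := aa_eq B (by omega)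
    have e3 : aa B (m + 1 + r) = B 0 ⟨m + r + 1, by omega⟩ := by
      have h5 := aa_eq B (show m + 1 + r ≤ n from h)
      rw [h5]
      exact congrArg _ (fin_mk_eq _ _ (by omega))
    have e1 : (⟨m + 1 + r, by omega⟩ : Fin (n + 1)) = ⟨m + r + 1, by omega⟩ :=
      fin_mk_eq _ _ (by omega)
    rw [e1, key, ih hm, Finset.sum_range_succ, e2, e3]
    unfold ff
    ring

include h1 h2 in
private lemma keyid (r : ℕ) (hr1 : 1 ≤ r) (hrn : r ≤ n) :
    aa B (n + 1 - r) =
      aa B r + ∑ j ∈ range (n - r), ff (aa B (j + 1)) (aa B (j + 1 + r)) := by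
  -- arithmetic facts first (before heavy hypotheses enter the context)
  have hlt : n - r < n := by omega
  have hlt1 : n - r < n + 1 := by omega
  have hlt2 : n - r + 1 < n + 1 := by omega
  have heq : n + 1 - r = n - r + 1 := by omega
  have heq2 : n - r + r = n := by omega
  have e4h : n + 1 - r ≤ n := by omega
  have hsum : n - r + r ≤ n := heq2.le
  have hne : (⟨n - r, hlt1⟩ : Fin (n + 1)) ≠ Fin.last n := by
    simp only [ne_eq, Fin.ext_iff, Fin.val_last]; omega
  have e4 : aa B (n + 1 - r) = B 0 ⟨n - r + 1, hlt2⟩ :=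
    (aa_eq B e4h).trans (congrArg _ (fin_mk_eq _ _ heq))
  have elast : (Fin.last n : Fin (n + 1)) = ⟨n - r + r, Nat.lt_succ_of_le hsum⟩ :=
    fin_mk_eq _ _ heq2.symm
  have hd := diag B h2 r hr1 (n - r) hsum
  have h1' := h1 ⟨n - r, hlt1⟩ hne
  rw [fin_mk_add_one hlt] at h1'
  rw [elast] at h1'
  rw [hd] at h1'
  rw [e4, ← h1']

include h1 h2 in
private lemma main_ind : ∀ t : ℕ, ∀ r : ℕ, 1 ≤ r → r ≤ n → n - r ≤ t →
    aa B r = aa B (n + 1 - r) := by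
  intro t
  induction t with
  | zero =>
    intro r h1r hrn hnr
    have hr0 : n - r = 0 := by omega
    have h := keyid B h1 h2 r h1r hrn
    rw [hr0] at h
    simpa using h.symm
  | succ t ih =>
    intro r h1r hrn hnr
    rcases Nat.lt_or_ge (n - r) (t + 1) with hlt | hge
    · exact ih r h1r hrn (by omega)
    · have hrt : n - r = t + 1 := by omega
      have key := keyid B h1 h2 r h1r hrn
      set g : ℕ → ℤ := fun j => ff (aa B (j + 1)) (aa B (j + 1 + r)) with hg
      have hrefl : ∑ j ∈ range (n - r), g (n - r - 1 - j) = ∑ j ∈ range (n - r), g j :=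
        Finset.sum_range_reflect g (n - r)
      have hneg : ∀ j ∈ range (n - r), g (n - r - 1 - j) = - g j := by
        intro j hj
        simp only [Finset.mem_range] at hj
        have e1 : n - r - 1 - j + 1 = n - r - j := by omega
        have e2 : n - r - 1 - j + 1 + r = n - j := by omega
        have e2' : n - r - j + r = n - j := by omega
        have ih1 : aa B (j + 1 + r) = aa B (n - r - j) := by
          have h := ih (j + 1 + r) (by omega) (by omega) (by omega)
          rw [h, show n + 1 - (j + 1 + r) = n - r - j by omega]
        have ih2 : aa B (n - j) = aa B (j + 1) := by
          have h := ih (n - j) (by omega) (by omega) (by omega)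
          rw [h, show n + 1 - (n - j) = j + 1 by omega]
        simp only [hg, e1, e2, e2', ih2]
        rw [← ih1]
        exact ff_antisymm _ _
      have hsum : ∑ j ∈ range (n - r), g j = 0 := by
        have h := Finset.sum_congr rfl hneg
        rw [hrefl, Finset.sum_neg_distrib] at h
        omega
      rw [key, hsum, add_zero]

end

theorem period_one_top_row_palindromic {n : ℕ}
    (B : Matrix (Fin (n + 1)) (Fin (n + 1)) ℤ) (hB : Bᵀ = -B)
    (h1 : ∀ j : Fin (n + 1), j ≠ Fin.last n → B j (Fin.last n) = B 0 (j + 1))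
    (h2 : ∀ j k : Fin (n + 1), j ≠ Fin.last n → k ≠ Fin.last n →
      B (j + 1) (k + 1) =
        B j k + B 0 (j + 1) * max (-B 0 (k + 1)) 0
          - B 0 (k + 1) * max (-B 0 (j + 1)) 0) :
    ∀ j : ℕ, (hj1 : 1 ≤ j) → (hjn : j ≤ n) →
      B 0 ⟨j, by omega⟩ = B 0 ⟨n + 1 - j, by omega⟩ := by
  intro j hj1 hjn
  have h := main_ind B h1 h2 n j hj1 hjn (by omega)
  rw [aa_eq B hjn, aa_eq B (show n + 1 - j ≤ n by omega)] at h
  exact h
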